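/- (Pyatetskii-Shapiro criterion, limsup form used in the paper) If there exists a constant c > 0 such that for every finite word w ∈ A*, limsup_{n→∞} #{0 ≤ i ≤ n-1 : T^i x ∈ C_w}/n ≤ c·(#A)^{-|w|}, then x is normal. -/

import Mathlib

open Filter Topology Finset

open scoped Classical
set_option maxHeartbeats 1000000


def pref {A : Type*} (x : ℕ → A) (n : ℕ) : List A := (List.range n).map x

/-- Number of occurrences of `u` in `w` (as a factor). -/
noncomputable def occ {A : Type*} (w u : List A) : ℕ :=
  {i : ℕ | i + u.length ≤ w.length ∧ (w.drop i).take u.length = u}.ncard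

/-- A sequence `x ∈ A^ℕ` is normal if every finite word occurs in its prefixes with
limiting frequency `(#A)^{-|w|}`. -/
def IsNormal {A : Type*} [Fintype A] (x : ℕ → A) : Prop :=
  ∀ w : List A,
    Tendsto (fun n => (occ (pref x n) w : ℝ) / n) atTop
      (nhds (((Fintype.card A : ℝ) ^ w.length)⁻¹))

namespace PS
set_option linter.unusedSectionVars false

variable {A : Type*} [Fintype A]

/-- the matching predicate -/
def mA (x : ℕ → A) (w : List A) (i : ℕ) : Prop :=
  ∀ j : Fin w.length, x (i + (j : ℕ)) = w.get j

noncomputable def cnt (x : ℕ → A) (w : List A) (n : ℕ) : ℕ :=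
  ((Finset.range n).filter (mA x w)).card

theorem cnt_le (x : ℕ → A) (w : List A) (n : ℕ) : cnt x w n ≤ n :=
  le_trans (Finset.card_filter_le _ _) (by simp)

theorem mA_ofFn {x : ℕ → A} {L : ℕ} {g : Fin L → A} {i : ℕ} :
    mA x (List.ofFn g) i ↔ (fun t : Fin L => x (i + (t : ℕ))) = g := by
  unfold mA
  constructor
  · intro hg
    funext t
    have := hg (Fin.cast (List.length_ofFn (f := g)).symm t)
    simpa using this
  · intro hg j
    subst hg
    simp [List.get_ofFn]

theorem sum_cnt (x : ℕ → A) (L n : ℕ) :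
    ∑ g : Fin L → A, cnt x (List.ofFn g) n = n := by
  unfold cnt
  simp only [Finset.card_filter]
  rw [Finset.sum_comm]
  have : ∀ i : ℕ, (∑ g : Fin L → A, if mA x (List.ofFn g) i then 1 else 0) = 1 := by
    intro i
    rw [Finset.sum_congr rfl (fun g _ => by
      rw [if_congr (mA_ofFn (x := x) (g := g) (i := i)) rfl rfl])]
    rw [Finset.sum_ite_eq (Finset.univ) (fun t : Fin L => x (i + (t : ℕ))) (fun _ => 1)]
    simp
  simp [this]



open Classical in
/-- number of functions `Fin L → A` with prescribed values at injectively-indexed coords -/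
theorem card_fixed {L : ℕ} {ι : Type*} [Fintype ι] (σ : ι → Fin L)
    (hσ : Function.Injective σ) (v : ι → A) :
    (Finset.univ.filter fun g : Fin L → A => ∀ j, g (σ j) = v j).card
      = Fintype.card A ^ (L - Fintype.card ι) := by
  classical
  set c : Fin L → Finset A := fun t => if h : ∃ j, σ j = t then {v h.choose} else Finset.univ with hc
  have hset : (Finset.univ.filter fun g : Fin L → A => ∀ j, g (σ j) = v j)
      = Fintype.piFinset c := by
    ext g
    simp only [Finset.mem_filter, Finset.mem_univ, true_and, Fintype.mem_piFinset]
    constructor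
    · intro hg t
      by_cases h : ∃ j, σ j = t
      · have hs := h.choose_spec
        simp only [hc, dif_pos h, Finset.mem_singleton]
        rw [← hg h.choose, hs]
      · simp [hc, dif_neg h]
    · intro hg j
      have h : ∃ j', σ j' = σ j := ⟨j, rfl⟩
      have := hg (σ j)
      rw [hc] at this
      simp only [dif_pos h, Finset.mem_singleton] at this
      rw [this]
      congr 1
      exact hσ h.choose_spec
  rw [hset, Fintype.card_piFinset]
  have hcard : ∀ t, (c t).card = if (∃ j, σ j = t) then 1 else Fintype.card A := by
    intro t
    by_cases h : ∃ j, σ j = t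
    · simp [hc, dif_pos h, h]
    · simp [hc, dif_neg h, h, Finset.card_univ]
  calc ∏ t, (c t).card = ∏ t, (if (∃ j, σ j = t) then 1 else Fintype.card A) := by
        exact Finset.prod_congr rfl fun t _ => hcard t
    _ = Fintype.card A ^ (L - Fintype.card ι) := by
        rw [Finset.prod_ite, Finset.prod_const_one, Finset.prod_const, one_mul]
        congr 1
        have h1 : (Finset.univ.filter fun t : Fin L => ∃ j, σ j = t)
            = Finset.univ.image σ := by
          ext t; simp [eq_comm]
        have h2 := Finset.card_filter_add_card_filter_not
          (s := (Finset.univ : Finset (Fin L))) (p := fun t => ∃ j, σ j = t)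
        rw [h1] at h2
        rw [Finset.card_image_of_injective _ hσ] at h2
        simp only [Finset.card_univ, Fintype.card_fin] at h2 ⊢
        omega


/-- matching of `w` at position `i` inside a window `g : Fin L → A` -/
def Pmatch (w : List A) {L : ℕ} (i : ℕ) (g : Fin L → A) : Prop :=
  ∀ (j : Fin w.length) (h : i + (j : ℕ) < L), g ⟨i + (j : ℕ), h⟩ = w.get j

theorem count_one (w : List A) {L i : ℕ} (hi : i + w.length ≤ L) :
    (Finset.univ.filter fun g : Fin L → A => Pmatch w i g).card
      = Fintype.card A ^ (L - w.length) := by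
  have hiL : ∀ j : Fin w.length, i + (j : ℕ) < L := by
    intro j; have := j.2; omega
  have hinj : Function.Injective (fun j : Fin w.length => (⟨i + (j : ℕ), hiL j⟩ : Fin L)) := by
    intro a b hab
    simp only [Fin.mk.injEq] at hab
    exact Fin.ext (by omega)
  have key := card_fixed (fun j : Fin w.length => (⟨i + (j : ℕ), hiL j⟩ : Fin L)) hinj w.get
  rw [Fintype.card_fin] at key
  rw [show ((Finset.univ.filter fun g : Fin L → A => Pmatch w i g)
      = Finset.univ.filter fun g : Fin L → A =>
        ∀ j : Fin w.length, g ⟨i + (j : ℕ), hiL j⟩ = w.get j) from ?_]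
  · convert key using 2 <;> congr!
  · apply Finset.filter_congr
    intro g _
    constructor
    · intro hg j; exact hg j (hiL j)
    · intro hg j hj; exact hg j

theorem count_two (w : List A) {L i i' : ℕ} (hii : i + w.length ≤ i')
    (hi' : i' + w.length ≤ L) :
    (Finset.univ.filter fun g : Fin L → A => Pmatch w i g ∧ Pmatch w i' g).card
      = Fintype.card A ^ (L - (w.length + w.length)) := by
  have hiL : ∀ j : Fin w.length, i + (j : ℕ) < L := by
    intro j; have := j.2; omega
  have hiL' : ∀ j : Fin w.length, i' + (j : ℕ) < L := by
    intro j; have := j.2; omega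
  set σ : Fin w.length ⊕ Fin w.length → Fin L :=
    Sum.elim (fun j => (⟨i + (j : ℕ), hiL j⟩ : Fin L))
      (fun j => (⟨i' + (j : ℕ), hiL' j⟩ : Fin L)) with hσ
  have hinj : Function.Injective σ := by
    intro a b hab
    rcases a with a | a <;> rcases b with b | b <;>
      simp only [hσ, Sum.elim_inl, Sum.elim_inr, Fin.mk.injEq] at hab <;>
      first
        | (congr 1; exact Fin.ext (by omega))
        | (exfalso; have := a.2; have := b.2; omega)
  have key := card_fixed σ hinj (Sum.elim w.get w.get)
  rw [Fintype.card_sum, Fintype.card_fin] at key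
  rw [show ((Finset.univ.filter fun g : Fin L → A => Pmatch w i g ∧ Pmatch w i' g)
      = Finset.univ.filter fun g : Fin L → A =>
        ∀ j : Fin w.length ⊕ Fin w.length, g (σ j) = Sum.elim w.get w.get j) from ?_]
  · convert key using 2 <;> congr!
  · apply Finset.filter_congr
    intro g _
    rw [Sum.forall]
    constructor
    · rintro ⟨h1, h2⟩
      exact ⟨fun j => h1 j (hiL j), fun j => h2 j (hiL' j)⟩
    · rintro ⟨h1, h2⟩
      exact ⟨fun j hj => h1 j, fun j hj => h2 j⟩

/-- occurrence count of `w` inside a window `g : Fin L → A` -/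
noncomputable def Bocc (w : List A) {L : ℕ} (g : Fin L → A) : ℕ :=
  ((Finset.range (L + 1 - w.length)).filter (fun i => Pmatch w i g)).card

theorem Bocc_le (w : List A) {L : ℕ} (g : Fin L → A) : Bocc w g ≤ L + 1 - w.length :=
  le_trans (Finset.card_filter_le _ _) (by simp)

/-- the window count for the window of `x` starting at `jj` -/
theorem Bocc_win (x : ℕ → A) (w : List A) {L : ℕ} (hk : w.length ≤ L) (jj : ℕ) :
    Bocc w (fun t : Fin L => x (jj + (t : ℕ)))
      = ((Finset.range (L + 1 - w.length)).filter (fun i => mA x w (jj + i))).card := by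
  unfold Bocc
  congr 1
  apply Finset.filter_congr
  intro i hi
  rw [Finset.mem_range] at hi
  unfold mA Pmatch
  constructor
  · intro hg j
    have hj : i + (j : ℕ) < L := by have := j.2; omega
    have := hg j hj
    simp only at this
    rw [← this]
    ring_nf
  · intro hg j hj
    have := hg j
    simp only
    rw [← this]
    ring_nf

theorem sum_Bocc (w : List A) {L : ℕ} (hk : w.length ≤ L) :
    ∑ g : Fin L → A, Bocc w g
      = (L + 1 - w.length) * Fintype.card A ^ (L - w.length) := by
  unfold Bocc
  simp only [Finset.card_filter]
  rw [Finset.sum_comm]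
  have key : ∀ i ∈ Finset.range (L + 1 - w.length),
      (∑ g : Fin L → A, if Pmatch w i g then 1 else 0)
        = Fintype.card A ^ (L - w.length) := by
    intro i hi
    rw [Finset.mem_range] at hi
    rw [← Finset.card_filter]
    have := count_one (L := L) w (i := i) (by omega)
    convert this using 2 <;> congr!
  rw [Finset.sum_congr rfl key]
  simp [mul_comm]

theorem sum_Bocc_sq (w : List A) {L : ℕ} (hk : 2 * w.length ≤ L) :
    ∑ g : Fin L → A, (Bocc w g) ^ 2
      ≤ (L + 1 - w.length) ^ 2 * Fintype.card A ^ (L - 2 * w.length)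
        + 2 * w.length * (L + 1 - w.length) * Fintype.card A ^ (L - w.length) := by
  set k := w.length with hkdef
  set m := L + 1 - k with hmdef
  have step1 : ∑ g : Fin L → A, (Bocc w g) ^ 2
      = ∑ p ∈ (Finset.range m ×ˢ Finset.range m),
          (Finset.univ.filter fun g : Fin L → A => Pmatch w p.1 g ∧ Pmatch w p.2 g).card := by
    have expand : ∀ g : Fin L → A, (Bocc w g) ^ 2
        = ∑ p ∈ (Finset.range m ×ˢ Finset.range m),
            (if Pmatch w p.1 g ∧ Pmatch w p.2 g then 1 else 0) := by
      intro g
      rw [sq]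
      unfold Bocc
      rw [Finset.card_filter, Finset.sum_mul_sum, Finset.sum_product]
      apply Finset.sum_congr rfl
      intro i _
      apply Finset.sum_congr rfl
      intro i' _
      by_cases h1 : Pmatch w i g <;> by_cases h2 : Pmatch w i' g <;>
        simp [h1, h2]
    rw [Finset.sum_congr rfl fun g _ => expand g, Finset.sum_comm]
    apply Finset.sum_congr rfl
    intro p _
    rw [← Finset.card_filter]
  rw [step1]
  rw [← Finset.sum_filter_add_sum_filter_not (Finset.range m ×ˢ Finset.range m)
    (fun p => p.2 < p.1 + k ∧ p.1 < p.2 + k)]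
  have hfar : ∀ p ∈ (Finset.range m ×ˢ Finset.range m).filter
      (fun p => ¬(p.2 < p.1 + k ∧ p.1 < p.2 + k)),
      (Finset.univ.filter fun g : Fin L → A => Pmatch w p.1 g ∧ Pmatch w p.2 g).card
        = Fintype.card A ^ (L - 2 * k) := by
    intro p hp
    rw [Finset.mem_filter, Finset.mem_product, Finset.mem_range, Finset.mem_range] at hp
    obtain ⟨⟨h1, h2⟩, h3⟩ := hp
    rcases le_or_gt (p.1 + k) p.2 with hle | hlt
    · rw [count_two w hle (by omega)]
      congr 1
      omega
    · have hle' : p.2 + k ≤ p.1 := by omega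
      rw [show (Finset.univ.filter fun g : Fin L → A => Pmatch w p.1 g ∧ Pmatch w p.2 g)
          = Finset.univ.filter fun g : Fin L → A => Pmatch w p.2 g ∧ Pmatch w p.1 g from by
        apply Finset.filter_congr; intro g _; constructor <;> exact fun h => ⟨h.2, h.1⟩]
      rw [count_two w hle' (by omega)]
      congr 1
      omega
  have hnear_bound : ∀ p ∈ (Finset.range m ×ˢ Finset.range m).filter
      (fun p => (p.2 < p.1 + k ∧ p.1 < p.2 + k)),
      (Finset.univ.filter fun g : Fin L → A => Pmatch w p.1 g ∧ Pmatch w p.2 g).card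
        ≤ Fintype.card A ^ (L - k) := by
    intro p hp
    rw [Finset.mem_filter, Finset.mem_product, Finset.mem_range, Finset.mem_range] at hp
    calc (Finset.univ.filter fun g : Fin L → A => Pmatch w p.1 g ∧ Pmatch w p.2 g).card
        ≤ (Finset.univ.filter fun g : Fin L → A => Pmatch w p.1 g).card := by
          apply Finset.card_le_card
          apply Finset.monotone_filter_right
          intro g _ hg
          exact hg.1
      _ = Fintype.card A ^ (L - k) := count_one w (by omega)
  have hnear_card : ((Finset.range m ×ˢ Finset.range m).filter
      (fun p => (p.2 < p.1 + k ∧ p.1 < p.2 + k))).card ≤ m * (2 * k) := by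
    have : ((Finset.range m ×ˢ Finset.range m).filter
        (fun p => (p.2 < p.1 + k ∧ p.1 < p.2 + k))).card
        ≤ (Finset.range m ×ˢ Finset.range (2 * k)).card := by
      apply Finset.card_le_card_of_injOn (fun p => (p.1, p.2 + k - p.1))
      · intro p hp
        rw [Finset.mem_coe, Finset.mem_filter, Finset.mem_product, Finset.mem_range, Finset.mem_range] at hp
        rw [Finset.mem_coe, Finset.mem_product, Finset.mem_range, Finset.mem_range]
        dsimp only
        omega
      · intro p hp q hq hpq
        rw [Finset.mem_coe, Finset.mem_filter, Finset.mem_product] at hp hq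
        rw [Prod.mk.injEq] at hpq
        obtain ⟨h1, h2⟩ := hpq
        have := hp.2
        have := hq.2
        rw [Prod.ext_iff]
        constructor
        · exact h1
        · omega
    rw [Finset.card_product, Finset.card_range, Finset.card_range] at this
    exact this
  have far_card : ((Finset.range m ×ˢ Finset.range m).filter
      (fun p => ¬(p.2 < p.1 + k ∧ p.1 < p.2 + k))).card ≤ m ^ 2 := by
    calc _ ≤ (Finset.range m ×ˢ Finset.range m).card := Finset.card_filter_le _ _
      _ = m ^ 2 := by rw [Finset.card_product, Finset.card_range, sq]
  have t1 : ∑ p ∈ (Finset.range m ×ˢ Finset.range m).filter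
      (fun p => (p.2 < p.1 + k ∧ p.1 < p.2 + k)),
      (Finset.univ.filter fun g : Fin L → A => Pmatch w p.1 g ∧ Pmatch w p.2 g).card
      ≤ m * (2 * k) * Fintype.card A ^ (L - k) := by
    calc _ ≤ ∑ _p ∈ (Finset.range m ×ˢ Finset.range m).filter
          (fun p => (p.2 < p.1 + k ∧ p.1 < p.2 + k)), Fintype.card A ^ (L - k) :=
        Finset.sum_le_sum hnear_bound
      _ = _ * Fintype.card A ^ (L - k) := by rw [Finset.sum_const, smul_eq_mul]
      _ ≤ m * (2 * k) * Fintype.card A ^ (L - k) :=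
        Nat.mul_le_mul_right _ hnear_card
  have t2 : ∑ p ∈ (Finset.range m ×ˢ Finset.range m).filter
      (fun p => ¬(p.2 < p.1 + k ∧ p.1 < p.2 + k)),
      (Finset.univ.filter fun g : Fin L → A => Pmatch w p.1 g ∧ Pmatch w p.2 g).card
      ≤ m ^ 2 * Fintype.card A ^ (L - 2 * k) := by
    rw [Finset.sum_congr rfl hfar, Finset.sum_const, smul_eq_mul]
    exact Nat.mul_le_mul_right _ far_card
  calc _ ≤ m * (2 * k) * Fintype.card A ^ (L - k)
        + m ^ 2 * Fintype.card A ^ (L - 2 * k) := Nat.add_le_add t1 t2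
    _ = _ := by ring

theorem sum_Bocc_cnt (x : ℕ → A) (w : List A) {L : ℕ} (hk : w.length ≤ L) (n : ℕ) :
    ∑ g : Fin L → A, Bocc w g * cnt x (List.ofFn g) n
      = ∑ j ∈ Finset.range n, Bocc w (fun t : Fin L => x (j + (t : ℕ))) := by
  have e1 : ∀ g : Fin L → A, Bocc w g * cnt x (List.ofFn g) n
      = ∑ j ∈ Finset.range n, if (fun t : Fin L => x (j + (t : ℕ))) = g then Bocc w g else 0 := by
    intro g
    unfold cnt
    rw [Finset.card_filter, Finset.mul_sum]
    apply Finset.sum_congr rfl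
    intro j _
    rw [if_congr (mA_ofFn (x := x) (g := g) (i := j)) rfl rfl]
    by_cases hj : (fun t : Fin L => x (j + (t : ℕ))) = g <;> simp [hj]
  rw [Finset.sum_congr rfl fun g _ => e1 g, Finset.sum_comm]
  apply Finset.sum_congr rfl
  intro j _
  rw [Finset.sum_ite_eq (Finset.univ) (fun t : Fin L => x (j + (t : ℕ))) (fun g => Bocc w g)]
  simp

theorem window_ineq (x : ℕ → A) (w : List A) {L : ℕ} (hk : w.length ≤ L) (n : ℕ) :
    (L + 1 - w.length) * cnt x w n
      ≤ (∑ g : Fin L → A, Bocc w g * cnt x (List.ofFn g) n)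
        + (L + 1 - w.length) * (L + 1 - w.length) := by
  set k := w.length with hkdef
  set m := L + 1 - k with hmdef
  have hm1 : 1 ≤ m := by omega
  set S := (Finset.Ico (m - 1) n).filter (mA x w) with hS
  set T := (Finset.range n ×ˢ Finset.range m).filter (fun p : ℕ × ℕ => mA x w (p.1 + p.2))
    with hT
  -- step D : cnt ≤ S.card + (m - 1)
  have stepD : cnt x w n ≤ S.card + (m - 1) := by
    unfold cnt
    have hsub : (Finset.range n).filter (mA x w)
        ⊆ S ∪ (Finset.range (m-1)).filter (mA x w) := by
      intro i hi
      rw [Finset.mem_filter, Finset.mem_range] at hi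
      rw [Finset.mem_union, hS, Finset.mem_filter, Finset.mem_filter,
        Finset.mem_Ico, Finset.mem_range]
      rcases lt_or_ge i (m - 1) with hcase | hcase
      · exact Or.inr ⟨hcase, hi.2⟩
      · exact Or.inl ⟨⟨hcase, hi.1⟩, hi.2⟩
    calc ((Finset.range n).filter (mA x w)).card
        ≤ (S ∪ (Finset.range (m-1)).filter (mA x w)).card := Finset.card_le_card hsub
      _ ≤ S.card + ((Finset.range (m-1)).filter (mA x w)).card := Finset.card_union_le _ _
      _ ≤ S.card + (m - 1) := by
          have := Finset.card_filter_le (Finset.range (m-1)) (mA x w)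
          simp only [Finset.card_range] at this
          omega
  -- step C : m * S.card ≤ T.card
  have stepC : m * S.card ≤ T.card := by
    have hinj : Set.InjOn (fun p : ℕ × ℕ => (p.1 - p.2, p.2)) ↑(S ×ˢ Finset.range m) := by
      intro p hp q hq hpq
      rw [Finset.coe_product, Set.mem_prod] at hp hq
      have hp1 := hp.1
      have hq1 := hq.1
      rw [Finset.mem_coe, hS, Finset.mem_filter, Finset.mem_Ico] at hp1 hq1
      have hp2 := hp.2
      have hq2 := hq.2
      rw [Finset.mem_coe, Finset.mem_range] at hp2 hq2
      rw [Prod.mk.injEq] at hpq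
      rw [Prod.ext_iff]
      constructor
      · omega
      · exact hpq.2
    have hmaps : ∀ p ∈ S ×ˢ Finset.range m, (p.1 - p.2, p.2) ∈ T := by
      intro p hp
      rw [Finset.mem_product] at hp
      have hp1 := hp.1
      rw [hS, Finset.mem_filter, Finset.mem_Ico] at hp1
      have hp2 := hp.2
      rw [Finset.mem_range] at hp2
      rw [hT, Finset.mem_filter, Finset.mem_product, Finset.mem_range, Finset.mem_range]
      have hpeq : p.1 - p.2 + p.2 = p.1 := by omega
      refine ⟨⟨by omega, hp2⟩, ?_⟩
      rw [hpeq]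
      exact hp1.2
    have h2 := Finset.card_le_card_of_injOn _ hmaps hinj
    rw [Finset.card_product, Finset.card_range] at h2
    calc m * S.card = S.card * m := mul_comm _ _
      _ ≤ T.card := h2
  -- step B : T.card = ∑_{j<n} Bocc (window j)
  have stepB : T.card = ∑ j ∈ Finset.range n, Bocc w (fun t : Fin L => x (j + (t : ℕ))) := by
    rw [hT, Finset.card_filter, Finset.sum_product]
    apply Finset.sum_congr rfl
    intro j _
    rw [Bocc_win x w hk j, Finset.card_filter]
  have := sum_Bocc_cnt x w hk n
  calc m * cnt x w n ≤ m * (S.card + (m-1)) := Nat.mul_le_mul_left _ stepD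
    _ = m * S.card + m * (m-1) := by ring
    _ ≤ T.card + m * m :=
        Nat.add_le_add stepC (Nat.mul_le_mul_left _ (by omega))
    _ = _ := by rw [stepB, ← this]

theorem sum_sub_sq {ι : Type*} (s : Finset ι) (f : ι → ℝ) (a : ℝ) :
    ∑ i ∈ s, (f i - a) ^ 2
      = (∑ i ∈ s, (f i) ^ 2) - 2 * a * (∑ i ∈ s, f i) + (s.card : ℝ) * a ^ 2 := by
  rw [Finset.sum_congr rfl (fun i _ => sub_sq (f i) a)]
  rw [Finset.sum_add_distrib, Finset.sum_sub_distrib, Finset.sum_const, nsmul_eq_mul]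
  congr 1
  rw [Finset.sum_congr rfl (fun i _ => by ring : ∀ i ∈ s, 2 * f i * a = a * (2 * f i))]
  rw [← Finset.mul_sum, ← Finset.mul_sum]
  ring

/-- words (windows) in which `w` occurs too often -/
noncomputable def BadSet (w : List A) (L : ℕ) (ε : ℝ) : Finset (Fin L → A) :=
  Finset.univ.filter fun g =>
    ((Fintype.card A : ℝ) ^ w.length)⁻¹ * ((L + 1 - w.length : ℕ) : ℝ)
      + ε * ((L + 1 - w.length : ℕ) : ℝ) < (Bocc w g : ℝ)

theorem badSet_card [Nonempty A] (w : List A) {L : ℕ} (hk : 2 * w.length ≤ L)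
    {ε : ℝ} (hε : 0 < ε) :
    ((BadSet w L ε).card : ℝ)
      ≤ 2 * w.length * (Fintype.card A : ℝ) ^ (L - w.length)
          / (ε ^ 2 * ((L + 1 - w.length : ℕ) : ℝ)) := by
  set k := w.length with hkdef
  set Q : ℝ := (Fintype.card A : ℝ) with hQdef
  have hQ : 0 < Q := by
    rw [hQdef]
    exact_mod_cast Fintype.card_pos
  set P : ℝ := Q ^ k with hPdef
  have hP : 0 < P := pow_pos hQ k
  set mn : ℕ := L + 1 - k with hmndef
  set m : ℝ := (mn : ℝ) with hmdef
  have hm : (1 : ℝ) ≤ m := by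
    rw [hmdef]
    exact_mod_cast Nat.one_le_iff_ne_zero.2 (by omega)
  have hm0 : 0 < m := lt_of_lt_of_le one_pos hm
  have hSB : ∑ g : Fin L → A, (Bocc w g : ℝ) = m * Q ^ (L - k) := by
    rw [hmdef, hQdef, ← Nat.cast_sum]
    rw [sum_Bocc w (by omega)]
    push_cast
    ring
  have hSB2 : ∑ g : Fin L → A, ((Bocc w g : ℝ)) ^ 2
      ≤ m ^ 2 * Q ^ (L - 2 * k) + 2 * k * m * Q ^ (L - k) := by
    have hcast := sum_Bocc_sq w hk
    have : ((∑ g : Fin L → A, (Bocc w g) ^ 2 : ℕ) : ℝ)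
        ≤ ((mn ^ 2 * Fintype.card A ^ (L - 2 * k)
          + 2 * k * mn * Fintype.card A ^ (L - k) : ℕ) : ℝ) := by
      exact_mod_cast hcast
    push_cast at this
    convert this using 2 <;> push_cast <;> ring
  have hcardfun : ((Fintype.card (Fin L → A) : ℕ) : ℝ) = Q ^ L := by
    rw [hQdef]
    rw [Fintype.card_fun, Fintype.card_fin]
    push_cast
    ring
  have e1 : Q ^ (L - k) = Q ^ (L - 2 * k) * Q ^ k := by
    rw [← pow_add]; congr 1; omega
  have e2 : Q ^ L = Q ^ (L - 2 * k) * Q ^ k * Q ^ k := by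
    rw [← pow_add, ← pow_add]; congr 1; omega
  have hPP : P⁻¹ * P = 1 := inv_mul_cancel₀ (ne_of_gt hP)
  -- variance bound
  have hvar : ∑ g : Fin L → A, ((Bocc w g : ℝ) - m * P⁻¹) ^ 2
      ≤ 2 * k * m * Q ^ (L - k) := by
    rw [sum_sub_sq Finset.univ (fun g => (Bocc w g : ℝ)) (m * P⁻¹)]
    rw [Finset.card_univ, hcardfun, hSB]
    have expand : Q ^ L * (m * P⁻¹) ^ 2 - 2 * (m * P⁻¹) * (m * Q ^ (L - k))
        = - (m ^ 2 * Q ^ (L - 2 * k)) := by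
      rw [e1, e2, hPdef]
      field_simp
      ring
    nlinarith [hSB2]
  -- lower bound of the variance by the bad set
  have hBadLb : ((BadSet w L ε).card : ℝ) * (ε * m) ^ 2
      ≤ ∑ g : Fin L → A, ((Bocc w g : ℝ) - m * P⁻¹) ^ 2 := by
    calc ((BadSet w L ε).card : ℝ) * (ε * m) ^ 2
        = ∑ _g ∈ BadSet w L ε, (ε * m) ^ 2 := by
          rw [Finset.sum_const, nsmul_eq_mul]
      _ ≤ ∑ g ∈ BadSet w L ε, ((Bocc w g : ℝ) - m * P⁻¹) ^ 2 := by
          apply Finset.sum_le_sum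
          intro g hg
          rw [BadSet, Finset.mem_filter] at hg
          have hgt : m * P⁻¹ + ε * m < (Bocc w g : ℝ) := by
            have := hg.2
            rw [← hPdef, ← hmndef, ← hmdef] at this
            linarith [this]
          have h1 : 0 ≤ ε * m := le_of_lt (mul_pos hε hm0)
          have h2 : ε * m ≤ (Bocc w g : ℝ) - m * P⁻¹ := by linarith
          exact pow_le_pow_left₀ h1 h2 2
      _ ≤ ∑ g : Fin L → A, ((Bocc w g : ℝ) - m * P⁻¹) ^ 2 := by
          apply Finset.sum_le_sum_of_subset_of_nonneg (Finset.filter_subset _ _)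
          intro g _ _
          exact sq_nonneg _
  have key : ((BadSet w L ε).card : ℝ) * (ε * m) ^ 2 ≤ 2 * k * m * Q ^ (L - k) :=
    le_trans hBadLb hvar
  rw [le_div_iff₀ (by positivity)]
  nlinarith [key, sq_nonneg (ε * m), hm0, (Nat.cast_nonneg (BadSet w L ε).card : (0:ℝ) ≤ _)]

theorem le_add_eps {a b : ℝ} (h : ∀ ε : ℝ, 0 < ε → a ≤ b + ε) : a ≤ b := by
  by_contra hab
  push_neg at hab
  have := h ((a - b) / 2) (by linarith)
  linarith

/-- normalized frequency -/
noncomputable def D (x : ℕ → A) (w : List A) (n : ℕ) : ℝ := (cnt x w n : ℝ) / n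

theorem D_nonneg (x : ℕ → A) (w : List A) (n : ℕ) : 0 ≤ D x w n := by
  unfold D; positivity

theorem D_le_one (x : ℕ → A) (w : List A) (n : ℕ) : D x w n ≤ 1 := by
  unfold D
  rcases Nat.eq_zero_or_pos n with h | h
  · simp [h]
  · rw [div_le_one (by exact_mod_cast h)]
    exact_mod_cast cnt_le x w n

theorem sum_D (x : ℕ → A) (L : ℕ) {n : ℕ} (hn : 1 ≤ n) :
    ∑ g : Fin L → A, D x (List.ofFn g) n = 1 := by
  unfold D
  rw [← Finset.sum_div, ← Nat.cast_sum, sum_cnt x L n]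
  exact div_self (by exact_mod_cast Nat.one_le_iff_ne_zero.1 hn)

theorem D_bdd (x : ℕ → A) (w : List A) :
    Filter.IsBoundedUnder (· ≤ ·) Filter.atTop (D x w) :=
  Filter.isBoundedUnder_of ⟨1, fun n => D_le_one x w n⟩

theorem D_cobdd (x : ℕ → A) (w : List A) :
    Filter.IsCoboundedUnder (· ≤ ·) Filter.atTop (D x w) :=
  Filter.isCoboundedUnder_le_of_le Filter.atTop (fun n => D_nonneg x w n)

/-- the pointwise splitting estimate -/
theorem D_le_split (x : ℕ → A) [Nonempty A] (w : List A) {L : ℕ} (hk : w.length ≤ L)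
    {ε : ℝ} (hε : 0 ≤ ε) {n : ℕ} (hn : 1 ≤ n) :
    D x w n ≤ (((Fintype.card A : ℝ) ^ w.length)⁻¹ + ε)
      + (∑ g ∈ BadSet w L ε, D x (List.ofFn g) n)
      + ((L + 1 - w.length : ℕ) : ℝ) / n := by
  classical
  set k := w.length with hkdef
  set Q : ℝ := (Fintype.card A : ℝ) with hQdef
  set P : ℝ := Q ^ k with hPdef
  have hQ : 0 < Q := by rw [hQdef]; exact_mod_cast Fintype.card_pos
  have hP : 0 < P := pow_pos hQ k
  set mn : ℕ := L + 1 - k with hmndef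
  set m : ℝ := (mn : ℝ) with hmdef
  have hm0 : 0 < m := by
    rw [hmdef]
    exact_mod_cast Nat.pos_of_ne_zero (by omega)
  have hn0 : (0 : ℝ) < n := by exact_mod_cast hn
  -- cast the window inequality
  have hw : m * (cnt x w n : ℝ)
      ≤ (∑ g : Fin L → A, (Bocc w g : ℝ) * (cnt x (List.ofFn g) n : ℝ)) + m * m := by
    have := window_ineq x w hk n
    have hcast : ((L + 1 - k) * cnt x w n : ℕ) ≤
        ((∑ g : Fin L → A, Bocc w g * cnt x (List.ofFn g) n) + (L + 1 - k) * (L + 1 - k) : ℕ) :=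
      this
    calc m * (cnt x w n : ℝ) = (((L + 1 - k) * cnt x w n : ℕ) : ℝ) := by push_cast; ring
      _ ≤ (((∑ g : Fin L → A, Bocc w g * cnt x (List.ofFn g) n)
            + (L + 1 - k) * (L + 1 - k) : ℕ) : ℝ) := by exact_mod_cast hcast
      _ = _ := by push_cast; ring
  -- divide by m * n
  have hkm : ∀ g : Fin L → A, (Bocc w g : ℝ) / m ≤ 1 := by
    intro g
    rw [div_le_one hm0, hmdef]
    exact_mod_cast Bocc_le w g
  have step1 : D x w n ≤ (∑ g : Fin L → A, ((Bocc w g : ℝ) / m) * D x (List.ofFn g) n)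
      + m / n := by
    have hmn : (0 : ℝ) < m * n := mul_pos hm0 hn0
    have e0 : D x w n = (m * (cnt x w n : ℝ)) / (m * n) := by
      unfold D
      rw [mul_div_mul_left _ _ (ne_of_gt hm0)]
    rw [e0]
    calc (m * (cnt x w n : ℝ)) / (m * n)
        ≤ ((∑ g : Fin L → A, (Bocc w g : ℝ) * (cnt x (List.ofFn g) n : ℝ)) + m * m) / (m * n) :=
          (div_le_div_iff_of_pos_right hmn).2 hw
      _ = (∑ g : Fin L → A, ((Bocc w g : ℝ) / m) * D x (List.ofFn g) n) + m / n := by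
          rw [add_div]
          congr 1
          · rw [Finset.sum_div]
            apply Finset.sum_congr rfl
            intro g _
            unfold D
            field_simp
          · rw [mul_div_mul_left _ _ (ne_of_gt hm0)]
  -- split the sum into bad and good parts
  have hsplit : (∑ g : Fin L → A, ((Bocc w g : ℝ) / m) * D x (List.ofFn g) n)
      = (∑ g ∈ BadSet w L ε, ((Bocc w g : ℝ) / m) * D x (List.ofFn g) n)
        + (∑ g ∈ Finset.univ.filter (fun g : Fin L → A =>
            ¬(P⁻¹ * m + ε * m < (Bocc w g : ℝ))),
              ((Bocc w g : ℝ) / m) * D x (List.ofFn g) n) := by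
    rw [BadSet]
    exact (Finset.sum_filter_add_sum_filter_not Finset.univ _ _).symm
  have hbad : (∑ g ∈ BadSet w L ε, ((Bocc w g : ℝ) / m) * D x (List.ofFn g) n)
      ≤ ∑ g ∈ BadSet w L ε, D x (List.ofFn g) n := by
    apply Finset.sum_le_sum
    intro g _
    calc ((Bocc w g : ℝ) / m) * D x (List.ofFn g) n
        ≤ 1 * D x (List.ofFn g) n :=
          mul_le_mul_of_nonneg_right (hkm g) (D_nonneg _ _ _)
      _ = _ := one_mul _
  have hgood : (∑ g ∈ Finset.univ.filter (fun g : Fin L → A =>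
        ¬(P⁻¹ * m + ε * m < (Bocc w g : ℝ))),
          ((Bocc w g : ℝ) / m) * D x (List.ofFn g) n) ≤ P⁻¹ + ε := by
    have hPe : (0 : ℝ) ≤ P⁻¹ + ε := by positivity
    calc (∑ g ∈ Finset.univ.filter (fun g : Fin L → A =>
          ¬(P⁻¹ * m + ε * m < (Bocc w g : ℝ))),
            ((Bocc w g : ℝ) / m) * D x (List.ofFn g) n)
        ≤ ∑ g ∈ Finset.univ.filter (fun g : Fin L → A =>
            ¬(P⁻¹ * m + ε * m < (Bocc w g : ℝ))),
              (P⁻¹ + ε) * D x (List.ofFn g) n := by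
          apply Finset.sum_le_sum
          intro g hg
          rw [Finset.mem_filter] at hg
          have hB : (Bocc w g : ℝ) ≤ (P⁻¹ + ε) * m := by
            have := hg.2
            push_neg at this
            linarith [this]
          apply mul_le_mul_of_nonneg_right _ (D_nonneg _ _ _)
          rw [div_le_iff₀ hm0]
          exact hB
      _ ≤ ∑ g : Fin L → A, (P⁻¹ + ε) * D x (List.ofFn g) n := by
          apply Finset.sum_le_sum_of_subset_of_nonneg (Finset.filter_subset _ _)
          intro g _ _
          exact mul_nonneg hPe (D_nonneg _ _ _)
      _ = (P⁻¹ + ε) * ∑ g : Fin L → A, D x (List.ofFn g) n := by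
          rw [Finset.mul_sum]
      _ = P⁻¹ + ε := by rw [sum_D x L hn, mul_one]
  calc D x w n ≤ (∑ g : Fin L → A, ((Bocc w g : ℝ) / m) * D x (List.ofFn g) n) + m / n := step1
    _ = ((∑ g ∈ BadSet w L ε, ((Bocc w g : ℝ) / m) * D x (List.ofFn g) n)
          + (∑ g ∈ Finset.univ.filter (fun g : Fin L → A =>
              ¬(P⁻¹ * m + ε * m < (Bocc w g : ℝ))),
                ((Bocc w g : ℝ) / m) * D x (List.ofFn g) n)) + m / n := by rw [hsplit]
    _ ≤ ((∑ g ∈ BadSet w L ε, D x (List.ofFn g) n) + (P⁻¹ + ε)) + m / n := by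
        exact add_le_add (add_le_add hbad hgood) le_rfl
    _ = (P⁻¹ + ε) + (∑ g ∈ BadSet w L ε, D x (List.ofFn g) n) + m / n := by ring

theorem limsup_D_le [Nonempty A] (x : ℕ → A) {c : ℝ} (hc : 0 < c)
    (hyp : ∀ w : List A,
      Filter.limsup (D x w) Filter.atTop ≤ c * ((Fintype.card A : ℝ) ^ w.length)⁻¹)
    (w : List A) :
    Filter.limsup (D x w) Filter.atTop ≤ ((Fintype.card A : ℝ) ^ w.length)⁻¹ := by
  set k := w.length with hkdef
  set Q : ℝ := (Fintype.card A : ℝ) with hQdef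
  have hQ1 : 1 ≤ Q := by rw [hQdef]; exact_mod_cast Fintype.card_pos
  have hQ0 : 0 < Q := lt_of_lt_of_le one_pos hQ1
  apply le_add_eps
  intro ε' hε'
  set ε : ℝ := ε' / 3 with hεdef
  have hε : 0 < ε := by positivity
  obtain ⟨m₀, hm₀⟩ := exists_nat_ge (2 * c * k / ε ^ 3)
  set L := 2 * k + m₀ + 1 with hLdef
  have hk2 : 2 * k ≤ L := by omega
  have hkL : k ≤ L := by omega
  set mn : ℕ := L + 1 - k with hmndef
  have hmnm₀ : (m₀ : ℝ) ≤ (mn : ℝ) := by exact_mod_cast Nat.le_of_lt_succ (by omega)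
  have hmn1 : (1 : ℝ) ≤ (mn : ℝ) := by exact_mod_cast Nat.one_le_iff_ne_zero.2 (by omega)
  have hmn0 : (0 : ℝ) < (mn : ℝ) := lt_of_lt_of_le one_pos hmn1
  have hBadc := badSet_card w hk2 hε
  rw [← hQdef, ← hkdef, ← hmndef] at hBadc
  set Bad := BadSet w L ε with hBaddef
  have hcQL : (0 : ℝ) ≤ c * (Q ^ L)⁻¹ := by positivity
  have hBadterm : (Bad.card : ℝ) * (c * (Q ^ L)⁻¹) ≤ ε := by
    have h1 : (Bad.card : ℝ) * (c * (Q ^ L)⁻¹)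
        ≤ (2 * k * Q ^ (L - k) / (ε ^ 2 * mn)) * (c * (Q ^ L)⁻¹) :=
      mul_le_mul_of_nonneg_right hBadc hcQL
    have h2 : Q ^ (L - k) ≤ Q ^ L := pow_le_pow_right₀ hQ1 (by omega)
    have h3 : (2 * k * Q ^ (L - k) / (ε ^ 2 * mn)) * (c * (Q ^ L)⁻¹)
        ≤ (2 * k * Q ^ L / (ε ^ 2 * mn)) * (c * (Q ^ L)⁻¹) := by
      apply mul_le_mul_of_nonneg_right _ hcQL
      apply div_le_div_of_nonneg_right _ (by positivity)
      nlinarith [h2, (Nat.cast_nonneg k : (0:ℝ) ≤ _)]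
    have h4 : (2 * k * Q ^ L / (ε ^ 2 * mn)) * (c * (Q ^ L)⁻¹)
        = 2 * k * c / (ε ^ 2 * mn) := by
      have : Q ^ L ≠ 0 := by positivity
      field_simp
    have h5 : 2 * k * c / (ε ^ 2 * mn) ≤ ε := by
      rw [div_le_iff₀ (by positivity)]
      have h6 : 2 * c * (k : ℝ) ≤ ε ^ 3 * m₀ := by
        rw [div_le_iff₀ (by positivity)] at hm₀
        linarith [hm₀]
      nlinarith [h6, hmnm₀, pow_pos hε 3]
    linarith [h1, h3, h4.le, h4.ge, h5]
  -- the δ-approximate bound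
  have hδbound : ∀ δ : ℝ, 0 < δ →
      Filter.limsup (D x w) Filter.atTop
        ≤ ((Q ^ k)⁻¹ + 2 * ε + (Bad.card : ℝ) * (c * (Q ^ L)⁻¹)) + δ := by
    intro δ hδ0
    set δ' : ℝ := δ / (Bad.card + 1) with hδ'def
    have hδ'0 : 0 < δ' := by
      have hb : (0 : ℝ) < (Bad.card : ℝ) + 1 := by
        linarith [(Nat.cast_nonneg Bad.card : (0:ℝ) ≤ _)]
      exact div_pos hδ0 hb
    have hev1 : ∀ g ∈ Bad, ∀ᶠ n in Filter.atTop, D x (List.ofFn g) n < c * (Q ^ L)⁻¹ + δ' := by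
      intro g _
      apply Filter.eventually_lt_of_limsup_lt _ (D_bdd x _)
      calc Filter.limsup (D x (List.ofFn g)) Filter.atTop
          ≤ c * ((Fintype.card A : ℝ) ^ (List.ofFn g).length)⁻¹ := hyp _
        _ = c * (Q ^ L)⁻¹ := by rw [List.length_ofFn, hQdef]
        _ < c * (Q ^ L)⁻¹ + δ' := by linarith
    have hev1' : ∀ᶠ n in Filter.atTop, ∀ g ∈ Bad, D x (List.ofFn g) n < c * (Q ^ L)⁻¹ + δ' :=
      (Filter.eventually_all_finset Bad).2 hev1
    have hev2 : ∀ᶠ n : ℕ in Filter.atTop, ((mn : ℕ) : ℝ) / (n : ℝ) < ε :=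
      (tendsto_const_div_atTop_nhds_zero_nat (mn : ℝ)).eventually (gt_mem_nhds hε)
    have hev3 : ∀ᶠ n : ℕ in Filter.atTop, 1 ≤ n := Filter.eventually_ge_atTop 1
    apply Filter.limsup_le_of_le (D_cobdd x w)
    filter_upwards [hev1', hev2, hev3] with n h1 h2 h3
    have hsp := D_le_split x w hkL (le_of_lt hε) h3
    rw [← hQdef, ← hkdef, ← hmndef, ← hBaddef] at hsp
    have hSb : ∑ g ∈ Bad, D x (List.ofFn g) n ≤ (Bad.card : ℝ) * (c * (Q ^ L)⁻¹ + δ') := by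
      calc ∑ g ∈ Bad, D x (List.ofFn g) n ≤ ∑ _g ∈ Bad, (c * (Q ^ L)⁻¹ + δ') :=
          Finset.sum_le_sum (fun g hg => le_of_lt (h1 g hg))
        _ = (Bad.card : ℝ) * (c * (Q ^ L)⁻¹ + δ') := by
            rw [Finset.sum_const, nsmul_eq_mul]
    have hcardδ : (Bad.card : ℝ) * δ' ≤ δ := by
      have hb : (0 : ℝ) < (Bad.card : ℝ) + 1 := by
        linarith [(Nat.cast_nonneg Bad.card : (0:ℝ) ≤ _)]
      rw [hδ'def, mul_div_assoc', div_le_iff₀ hb]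
      nlinarith [hδ0, (Nat.cast_nonneg Bad.card : (0:ℝ) ≤ _)]
    have expand : (Bad.card : ℝ) * (c * (Q ^ L)⁻¹ + δ')
        = (Bad.card : ℝ) * (c * (Q ^ L)⁻¹) + (Bad.card : ℝ) * δ' := by ring
    linarith [hsp, hSb, h2, hcardδ]
  have hfin : Filter.limsup (D x w) Filter.atTop
      ≤ (Q ^ k)⁻¹ + 2 * ε + (Bad.card : ℝ) * (c * (Q ^ L)⁻¹) :=
    le_add_eps (fun δ hδ => hδbound δ hδ)
  have : Filter.limsup (D x w) Filter.atTop ≤ (Q ^ k)⁻¹ + 3 * ε := by linarith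
  rw [hεdef] at this
  linarith

theorem ncard_eq_cnt (x : ℕ → A) (w : List A) (n : ℕ) :
    ({i : ℕ | i < n ∧ ∀ j : Fin w.length, x (i + (j : ℕ)) = w.get j}).ncard = cnt x w n := by
  unfold cnt
  rw [← Set.ncard_coe_finset]
  congr 1
  ext i
  simp only [Set.mem_setOf_eq, Finset.coe_filter, Finset.mem_range]
  rfl

theorem takedrop (x : ℕ → A) (w : List A) {i n : ℕ} (hi : i + w.length ≤ n) :
    (((List.range n).map x).drop i).take w.length = w ↔ mA x w i := by
  constructor
  · intro hl
    intro j
    have hj : (j : ℕ) < w.length := j.2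
    have hlen : (j : ℕ) < (List.take w.length (List.drop i (List.map x (List.range n)))).length := by
      rw [hl]; exact hj
    have e2 : (List.take w.length (List.drop i (List.map x (List.range n))))[(j : ℕ)]'hlen
        = w[(j : ℕ)]'hj := List.getElem_of_eq hl _
    have e1 : (List.take w.length (List.drop i (List.map x (List.range n))))[(j : ℕ)]'hlen
        = x (i + (j : ℕ)) := by
      rw [List.getElem_take, List.getElem_drop, List.getElem_map, List.getElem_range]
    rw [List.get_eq_getElem, ← e2, e1]
  · intro hm
    apply List.ext_getElem
    · rw [List.length_take, List.length_drop, List.length_map, List.length_range]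
      omega
    · intro j h1 h2
      rw [List.getElem_take, List.getElem_drop, List.getElem_map, List.getElem_range]
      exact (hm ⟨j, h2⟩).trans (List.get_eq_getElem (l := w) (i := ⟨j, h2⟩))

theorem occ_eq (x : ℕ → A) (w : List A) (n : ℕ) :
    occ (pref x n) w
      = ((Finset.range (n + 1)).filter fun i => i + w.length ≤ n ∧ mA x w i).card := by
  unfold occ pref
  rw [← Set.ncard_coe_finset]
  congr 1
  ext i
  simp only [Set.mem_setOf_eq, Finset.coe_filter, Finset.mem_range,
    List.length_map, List.length_range]
  constructor
  · rintro ⟨h1, h2⟩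
    exact ⟨by omega, h1, (takedrop x w h1).1 h2⟩
  · rintro ⟨h0, h1, h2⟩
    exact ⟨h1, (takedrop x w h1).2 h2⟩

theorem occ_le_cnt (x : ℕ → A) (w : List A) (n : ℕ) :
    occ (pref x n) w ≤ cnt x w n + 1 := by
  rw [occ_eq]
  unfold cnt
  have hsub : ((Finset.range (n + 1)).filter fun i => i + w.length ≤ n ∧ mA x w i)
      ⊆ ((Finset.range n).filter (mA x w)) ∪ {n} := by
    intro i hi
    rw [Finset.mem_filter, Finset.mem_range] at hi
    rw [Finset.mem_union, Finset.mem_filter, Finset.mem_range, Finset.mem_singleton]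
    rcases Nat.lt_or_ge i n with hc | hc
    · exact Or.inl ⟨hc, hi.2.2⟩
    · exact Or.inr (by omega)
  calc _ ≤ (((Finset.range n).filter (mA x w)) ∪ {n}).card := Finset.card_le_card hsub
    _ ≤ ((Finset.range n).filter (mA x w)).card + ({n} : Finset ℕ).card :=
        Finset.card_union_le _ _
    _ = _ := by rw [Finset.card_singleton]

theorem cnt_le_occ (x : ℕ → A) (w : List A) (n : ℕ) :
    cnt x w n ≤ occ (pref x n) w + w.length := by
  rw [occ_eq]
  unfold cnt
  have hsub : ((Finset.range n).filter (mA x w))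
      ⊆ ((Finset.range (n + 1)).filter fun i => i + w.length ≤ n ∧ mA x w i)
        ∪ Finset.Ico (n + 1 - w.length) n := by
    intro i hi
    rw [Finset.mem_filter, Finset.mem_range] at hi
    rw [Finset.mem_union, Finset.mem_filter, Finset.mem_range, Finset.mem_Ico]
    rcases Nat.lt_or_ge n (i + w.length) with hc | hc
    · exact Or.inr (by omega)
    · exact Or.inl ⟨by omega, hc, hi.2⟩
  calc _ ≤ _ := Finset.card_le_card hsub
    _ ≤ ((Finset.range (n + 1)).filter fun i => i + w.length ≤ n ∧ mA x w i).card
        + (Finset.Ico (n + 1 - w.length) n).card := Finset.card_union_le _ _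
    _ ≤ _ := by
        rw [Nat.card_Ico]
        have : n - (n + 1 - w.length) ≤ w.length := by omega
        omega

theorem tendsto_D [Nonempty A] (x : ℕ → A) {c : ℝ} (hc : 0 < c)
    (hyp : ∀ w : List A,
      Filter.limsup (D x w) Filter.atTop ≤ c * ((Fintype.card A : ℝ) ^ w.length)⁻¹)
    (w : List A) :
    Filter.Tendsto (D x w) Filter.atTop (nhds (((Fintype.card A : ℝ) ^ w.length)⁻¹)) := by
  have hup := limsup_D_le x hc hyp
  set k := w.length with hkdef
  set Q : ℝ := (Fintype.card A : ℝ) with hQdef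
  have hQ1 : 1 ≤ Q := by rw [hQdef]; exact_mod_cast Fintype.card_pos
  have hQ0 : 0 < Q := lt_of_lt_of_le one_pos hQ1
  set P : ℝ := Q ^ k with hPdef
  have hP : 0 < P := pow_pos hQ0 k
  rw [Metric.tendsto_atTop]
  intro ε hε
  have hU : ∀ᶠ n in Filter.atTop, D x w n < P⁻¹ + ε / 2 :=
    Filter.eventually_lt_of_limsup_lt (lt_of_le_of_lt (hup w) (by linarith)) (D_bdd x w)
  set g₀ : Fin k → A := w.get with hg₀def
  have hg₀ : List.ofFn g₀ = w := List.ofFn_get w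
  set δ : ℝ := ε / (2 * P) with hδdef
  have hδ : 0 < δ := by positivity
  have per : ∀ g ∈ Finset.univ.erase g₀,
      ∀ᶠ n in Filter.atTop, D x (List.ofFn g) n < P⁻¹ + δ := by
    intro g _
    apply Filter.eventually_lt_of_limsup_lt _ (D_bdd x _)
    have := hup (List.ofFn g)
    rw [List.length_ofFn] at this
    calc Filter.limsup (D x (List.ofFn g)) Filter.atTop ≤ (Q ^ k)⁻¹ := this
      _ < P⁻¹ + δ := by rw [← hPdef]; linarith
  have hall : ∀ᶠ n in Filter.atTop, ∀ g ∈ Finset.univ.erase g₀,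
      D x (List.ofFn g) n < P⁻¹ + δ :=
    (Filter.eventually_all_finset _).2 per
  have hcard : ((Finset.univ.erase g₀).card : ℝ) = Q ^ k - 1 := by
    rw [Finset.card_erase_of_mem (Finset.mem_univ _), Finset.card_univ]
    have h1 : 1 ≤ Fintype.card (Fin k → A) := Fintype.card_pos
    rw [Nat.cast_sub h1, Fintype.card_fun, Fintype.card_fin]
    push_cast
    ring
  have E : ∀ᶠ n in Filter.atTop, dist (D x w n) P⁻¹ < ε := by
    filter_upwards [hU, hall, Filter.eventually_ge_atTop 1] with n h1 h2 h3
    -- lower bound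
    have hsum := sum_D x k h3
    rw [← Finset.add_sum_erase Finset.univ (fun g => D x (List.ofFn g) n)
      (Finset.mem_univ g₀)] at hsum
    rw [hg₀] at hsum
    have hSb : ∑ g ∈ Finset.univ.erase g₀, D x (List.ofFn g) n
        ≤ ((Finset.univ.erase g₀).card : ℝ) * (P⁻¹ + δ) := by
      calc ∑ g ∈ Finset.univ.erase g₀, D x (List.ofFn g) n
          ≤ ∑ _g ∈ Finset.univ.erase g₀, (P⁻¹ + δ) :=
            Finset.sum_le_sum (fun g hg => le_of_lt (h2 g hg))
        _ = _ := by rw [Finset.sum_const, nsmul_eq_mul]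
    rw [hcard] at hSb
    have hPinv : Q ^ k * P⁻¹ = 1 := by
      rw [← hPdef]; exact mul_inv_cancel₀ (ne_of_gt hP)
    have hPδ : P * δ = ε / 2 := by
      rw [hδdef]; field_simp
    have hQkP : Q ^ k = P := hPdef.symm
    have hlow : P⁻¹ - ε / 2 ≤ D x w n := by
      have expand : (Q ^ k - 1) * (P⁻¹ + δ)
          = Q ^ k * P⁻¹ + Q ^ k * δ - P⁻¹ - δ := by ring
      rw [hQkP] at expand
      nlinarith [hsum, hSb, hδ, hPδ, hPinv, hQkP]
    rw [Real.dist_eq, abs_lt]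
    constructor
    · linarith
    · linarith
  exact Filter.eventually_atTop.1 E

end PS

open PS in
theorem pyatetskiiShapiro {A : Type*} [Fintype A] (x : ℕ → A)
    (h : ∃ c : ℝ, 0 < c ∧ ∀ w : List A,
      Filter.limsup
        (fun n : ℕ =>
          (({i : ℕ | i < n ∧ ∀ j : Fin w.length, x (i + (j : ℕ)) = w.get j}).ncard : ℝ)
            / n)
        atTop ≤ c * ((Fintype.card A : ℝ) ^ w.length)⁻¹) :
    IsNormal x := by
  obtain ⟨c, hc, hyp⟩ := h
  haveI : Nonempty A := ⟨x 0⟩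
  have hyp' : ∀ w : List A,
      Filter.limsup (D x w) Filter.atTop ≤ c * ((Fintype.card A : ℝ) ^ w.length)⁻¹ := by
    intro w
    have hw := hyp w
    have heq : (fun n : ℕ =>
        (({i : ℕ | i < n ∧ ∀ j : Fin w.length, x (i + (j : ℕ)) = w.get j}).ncard : ℝ) / n)
        = D x w := by
      funext n
      rw [ncard_eq_cnt]
      rfl
    rwa [heq] at hw
  intro w
  have hDt := tendsto_D x hc hyp' w
  rw [Metric.tendsto_atTop] at hDt ⊢
  intro ε hε
  obtain ⟨N1, hN1⟩ := hDt (ε / 2) (by linarith)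
  obtain ⟨N2, hN2⟩ := Filter.eventually_atTop.1
    ((tendsto_const_div_atTop_nhds_zero_nat ((w.length : ℝ) + 1)).eventually
      (gt_mem_nhds (show (0:ℝ) < ε / 2 by linarith)))
  refine ⟨max N1 (max N2 1), fun n hn => ?_⟩
  have hn1 : N1 ≤ n := le_trans (le_max_left _ _) hn
  have hn2 : N2 ≤ n := le_trans (le_trans (le_max_left _ _) (le_max_right _ _)) hn
  have hn3 : 1 ≤ n := le_trans (le_trans (le_max_right _ _) (le_max_right _ _)) hn
  have hn0 : (0 : ℝ) < n := by exact_mod_cast hn3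
  have hd1 := hN1 n hn1
  have hd2 := hN2 n hn2
  have hocc1 : (occ (pref x n) w : ℝ) ≤ (cnt x w n : ℝ) + (w.length + 1) := by
    have := occ_le_cnt x w n
    have hcast : (occ (pref x n) w : ℝ) ≤ (cnt x w n : ℝ) + 1 := by exact_mod_cast this
    have : (0:ℝ) ≤ (w.length : ℝ) := by positivity
    linarith
  have hocc2 : (cnt x w n : ℝ) ≤ (occ (pref x n) w : ℝ) + (w.length + 1) := by
    have := cnt_le_occ x w n
    have hcast : (cnt x w n : ℝ) ≤ (occ (pref x n) w : ℝ) + w.length := by exact_mod_cast this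
    linarith
  have hdist : dist ((occ (pref x n) w : ℝ) / n) (D x w n) ≤ ((w.length : ℝ) + 1) / n := by
    rw [Real.dist_eq, abs_le]
    have hDval : D x w n = (cnt x w n : ℝ) / n := rfl
    rw [hDval]
    constructor
    · rw [div_sub_div_same, ← neg_div]
      exact (div_le_div_iff_of_pos_right hn0).2 (by linarith)
    · rw [div_sub_div_same]
      exact (div_le_div_iff_of_pos_right hn0).2 (by linarith)
  calc dist ((occ (pref x n) w : ℝ) / n) (((Fintype.card A : ℝ) ^ w.length)⁻¹)
      ≤ dist ((occ (pref x n) w : ℝ) / n) (D x w n)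
        + dist (D x w n) (((Fintype.card A : ℝ) ^ w.length)⁻¹) := dist_triangle _ _ _
    _ < ε / 2 + ε / 2 := add_lt_add_of_le_of_lt (le_trans hdist (le_of_lt hd2)) hd1
    _ = ε := add_halves ε
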